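/- The series ∑_{d=2}^{∞} d · 3 · 2^d · (d-1) · (d+2) / (d+3)! converges and its sum equals 3; i.e. the average distance between consecutive local maxima of a sequence of i.i.d. continuously distributed random numbers is exactly 3. -/

import Mathlib

open NormedSpace in
theorem average_distance_eq_three :
    HasSum (fun n : ℕ =>
      ((n : ℝ) + 2) *
        ((3 * 2 ^ (n + 2) * ((n : ℝ) + 1) * ((n : ℝ) + 4)) / (Nat.factorial (n + 5))))
      3 := by
  have h : HasSum (fun k : ℕ => (2:ℝ)^k / k.factorial) (Real.exp 2) := by
    rw [Real.exp_eq_exp_ℝ]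
    exact expSeries_div_hasSum_exp (2:ℝ)
  have hs : ∀ k : ℕ, HasSum (fun n : ℕ => (2:ℝ)^(n+k) / (n+k).factorial)
      (Real.exp 2 - ∑ i ∈ Finset.range k, (2:ℝ)^i / i.factorial) :=
    fun k => (hasSum_nat_add_iff' k).mpr h
  have hc := ((((hs 2).mul_left 3).sub ((hs 3).mul_left (15/2))).add ((hs 4).mul_left 9)).sub
    ((hs 5).mul_left (9/2))
  have heq : (fun n : ℕ =>
      ((n : ℝ) + 2) *
        ((3 * 2 ^ (n + 2) * ((n : ℝ) + 1) * ((n : ℝ) + 4)) / (Nat.factorial (n + 5))))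
      = fun n : ℕ =>
        3 * ((2:ℝ)^(n+2) / (n+2).factorial) - 15/2 * ((2:ℝ)^(n+3) / (n+3).factorial)
        + 9 * ((2:ℝ)^(n+4) / (n+4).factorial) - 9/2 * ((2:ℝ)^(n+5) / (n+5).factorial) := by
    funext n
    have F0 : (0:ℝ) < (n+2).factorial := by positivity
    have c3 : (((n+3).factorial : ℕ) : ℝ) = ((n:ℝ)+3) * (n+2).factorial := by
      rw [show n+3 = (n+2)+1 from rfl, Nat.factorial_succ]; push_cast; ring
    have c4 : (((n+4).factorial : ℕ) : ℝ) = ((n:ℝ)+4) * (n+3).factorial := by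
      rw [show n+4 = (n+3)+1 from rfl, Nat.factorial_succ]; push_cast; ring
    have c5 : (((n+5).factorial : ℕ) : ℝ) = ((n:ℝ)+5) * (n+4).factorial := by
      rw [show n+5 = (n+4)+1 from rfl, Nat.factorial_succ]; push_cast; ring
    rw [c5, c4, c3]
    field_simp
    ring
  rw [heq]
  convert hc using 1
  case e'_3 => rfl
  simp [Finset.sum_range_succ, Nat.factorial]
  ring
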